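/- f is level C-bounded at x̄ (i.e., f(X) ∩ (f(x̄) − C) ⊆ M + C for some bounded set M ⊆ Y) if and only if x̄ is an ε-minimal point of f for some ε ≥ 0. -/

import Mathlib

open Pointwise Metric

/-- `f` is level `C`-bounded at `xbar` (i.e. `f(X) ∩ (f xbar - C) ⊆ M + C`
for some bounded `M ⊆ Y`) iff `xbar` is an `ε`-minimal point of `f` for some `ε ≥ 0`. -/
theorem stmt_1 {X : Type*} [MetricSpace X] {Y : Type*} [NormedAddCommGroup Y]
    [NormedSpace ℝ Y] (C : Set Y)
    (hC0 : (0:Y) ∈ C)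
    (hCadd : ∀ a ∈ C, ∀ b ∈ C, a + b ∈ C)
    (hCsmul : ∀ a ∈ C, ∀ t : ℝ, 0 < t → t • a ∈ C)
    (hCpointed : C ∩ (-C) = {(0:Y)})
    (f : X → Y) (xbar : X) :
    (∃ M : Set Y, Bornology.IsBounded M ∧
        (f '' Set.univ) ∩ ({f xbar} - C) ⊆ M + C) ↔
      (∃ ε : ℝ, 0 ≤ ε ∧
        (f '' Set.univ) ∩ ({f xbar} - C) ⊆ {f xbar} + C + ε • closedBall (0:Y) 1) := by
  constructor
  · rintro ⟨M, hMb, hM⟩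
    obtain ⟨R, hR⟩ := hMb.subset_closedBall 0
    refine ⟨max R 0 + ‖f xbar‖, by positivity, ?_⟩
    intro y hy
    obtain ⟨m, hm, c, hc, rfl⟩ := hM hy
    set ε : ℝ := max R 0 + ‖f xbar‖ with hε
    have hmn : ‖m - f xbar‖ ≤ ε := by
      have h1 : ‖m‖ ≤ R := by simpa using hR hm
      calc ‖m - f xbar‖ ≤ ‖m‖ + ‖f xbar‖ := norm_sub_le _ _
        _ ≤ ε := by
          have : R ≤ max R 0 := le_max_left _ _
          linarith
    -- m + c = f xbar + c + (m - f xbar)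
    refine ⟨f xbar + c, ⟨f xbar, rfl, c, hc, rfl⟩, ?_, ?_, ?_⟩
    · exact m - f xbar
    rotate_left
    · abel
    · rcases eq_or_lt_of_le (show (0:ℝ) ≤ ε by positivity) with h0 | h0
      · have : m - f xbar = 0 := by
          have := hmn; rw [← h0] at this
          simpa using norm_le_zero_iff.mp this
        exact ⟨0, by simp, by simp [this]⟩
      · refine ⟨ε⁻¹ • (m - f xbar), ?_, ?_⟩
        · simp only [mem_closedBall, dist_zero_right, norm_smul, norm_inv,
            Real.norm_eq_abs, abs_of_pos h0]
          calc ε⁻¹ * ‖m - f xbar‖ ≤ ε⁻¹ * ε := by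
                apply mul_le_mul_of_nonneg_left hmn (by positivity)
            _ = 1 := inv_mul_cancel₀ h0.ne'
        · show ε • _ = _
          rw [smul_smul, mul_inv_cancel₀ h0.ne', one_smul]
  · rintro ⟨ε, hε, h⟩
    refine ⟨{f xbar} + ε • closedBall (0:Y) 1, ?_, ?_⟩
    · exact Bornology.isBounded_singleton.add
        (Bornology.IsBounded.smul₀ isBounded_closedBall ε)
    · intro y hy
      obtain ⟨u, ⟨a, ha, b, hb, rfl⟩, d, hd, rfl⟩ := h hy
      obtain rfl : a = f xbar := ha
      exact ⟨f xbar + d, ⟨f xbar, rfl, d, hd, rfl⟩, b, hb, add_right_comm _ _ _⟩
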